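/- Fix an integer n ≥ 1, masses m₁, m₂ > 0 and exponents γ₁, γ₂ > 1. Let U = (n₁, n₂, w) and V = (ν₁, ν₂, ω) be macroscopic states with n₁, n₂ > 0, ν₁, ν₂ ≥ 0 and ρ(V) > 0. Then η(V) − η(U) − [ (−(m₁/2)|u(U)|² + s₁′(n₁))(ν₁ − n₁) + (−(m₂/2)|u(U)|² + s₂′(n₂))(ν₂ − n₂) + u(U)·(ω − w) ] = (ρ(V)/2) |u(V) − u(U)|² + s₁(ν₁|n₁) + s₂(ν₂|n₂). (The bracketed expression is Dη(U)·(V − U), so the left-hand side is the relative entropy η(V|U).) -/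

import Mathlib

open MeasureTheory

/-- The isentropic internal-energy function `s(x) = m^{n(γ−1)/2} x^γ/(γ−1)`. -/
noncomputable def sFn (n : ℕ) (m γ : ℝ) (x : ℝ) : ℝ :=
  m ^ ((n : ℝ) * (γ - 1) / 2) * x ^ γ / (γ - 1)

/-- Its derivative `s′(x) = γ m^{n(γ−1)/2} x^{γ−1}/(γ−1)`. -/
noncomputable def sFn' (n : ℕ) (m γ : ℝ) (x : ℝ) : ℝ :=
  γ * m ^ ((n : ℝ) * (γ - 1) / 2) * x ^ (γ - 1) / (γ - 1)

/-- The relative quantity `s(y|x) = s(y) − s(x) − s′(x)(y − x)`. -/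
noncomputable def sRel (n : ℕ) (m γ : ℝ) (y x : ℝ) : ℝ :=
  sFn n m γ y - sFn n m γ x - sFn' n m γ x * (y - x)

/-- For macroscopic states `U = (n₁, n₂, w)` (with `n₁, n₂ > 0`) and
`V = (ν₁, ν₂, ω)` (with `ν₁, ν₂ ≥ 0` and `ρ(V) > 0`), the relative entropy
`η(V) − η(U) − Dη(U)·(V − U)` equals
`(ρ(V)/2)|u(V) − u(U)|² + s₁(ν₁|n₁) + s₂(ν₂|n₂)`, where `ρ(U) = m₁n₁ + m₂n₂`,
`u(U) = w/ρ(U)`, and `η(U) = |w|²/(2ρ(U)) + s₁(n₁) + s₂(n₂)`. -/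
theorem relative_entropy_identity (n : ℕ) (hn : 1 ≤ n) (m₁ m₂ γ₁ γ₂ : ℝ)
    (hm₁ : 0 < m₁) (hm₂ : 0 < m₂) (hγ₁ : 1 < γ₁) (hγ₂ : 1 < γ₂)
    (n₁ n₂ : ℝ) (w : EuclideanSpace ℝ (Fin n)) (ν₁ ν₂ : ℝ)
    (ω : EuclideanSpace ℝ (Fin n))
    (hn₁ : 0 < n₁) (hn₂ : 0 < n₂) (hν₁ : 0 ≤ ν₁) (hν₂ : 0 ≤ ν₂)
    (hρV : 0 < m₁ * ν₁ + m₂ * ν₂) :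
    (‖ω‖ ^ 2 / (2 * (m₁ * ν₁ + m₂ * ν₂)) + sFn n m₁ γ₁ ν₁ + sFn n m₂ γ₂ ν₂)
      - (‖w‖ ^ 2 / (2 * (m₁ * n₁ + m₂ * n₂)) + sFn n m₁ γ₁ n₁ + sFn n m₂ γ₂ n₂)
      - ((-(m₁ / 2) * ‖(m₁ * n₁ + m₂ * n₂)⁻¹ • w‖ ^ 2 + sFn' n m₁ γ₁ n₁) * (ν₁ - n₁)
        + (-(m₂ / 2) * ‖(m₁ * n₁ + m₂ * n₂)⁻¹ • w‖ ^ 2 + sFn' n m₂ γ₂ n₂) * (ν₂ - n₂)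
        + (inner ℝ ((m₁ * n₁ + m₂ * n₂)⁻¹ • w) (ω - w) : ℝ)) =
      (m₁ * ν₁ + m₂ * ν₂) / 2 *
          ‖(m₁ * ν₁ + m₂ * ν₂)⁻¹ • ω - (m₁ * n₁ + m₂ * n₂)⁻¹ • w‖ ^ 2
        + sRel n m₁ γ₁ ν₁ n₁ + sRel n m₂ γ₂ ν₂ n₂ := by
  have hρU : 0 < m₁ * n₁ + m₂ * n₂ := by positivity
  have ha : (m₁ * n₁ + m₂ * n₂) ≠ 0 := hρU.ne'
  have hb : (m₁ * ν₁ + m₂ * ν₂) ≠ 0 := hρV.ne'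
  simp only [sRel, @norm_sub_sq_real, real_inner_smul_left, real_inner_smul_right,
    inner_sub_right, norm_smul, Real.norm_eq_abs, abs_of_pos (inv_pos.mpr hρU),
    abs_of_pos (inv_pos.mpr hρV), real_inner_self_eq_norm_sq,
    real_inner_comm ω w, mul_pow]
  field_simp
  ring
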